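/- Let q₁, q₂, s₁, s₂ be complex numbers satisfying q₁s₁ - q₂s₂ = 0 and Re(q₁·conj(q₂)) = Re(s₂·conj(s₁)). If moreover Re(q₁·conj(q₂)) ≠ 0, then |q₁| = |s₂| and |q₂| = |s₁|. -/

import Mathlib

open Complex

/-- Type II characterization: if `q₁s₁ - q₂s₂ = 0`, `Re(q₁·conj q₂) = Re(s₂·conj s₁)`,
and `Re(q₁·conj q₂) ≠ 0`, then `|q₁| = |s₂|` and `|q₂| = |s₁|`. -/
theorem stmt_1 (q₁ q₂ s₁ s₂ : ℂ)
    (h1 : q₁ * s₁ - q₂ * s₂ = 0)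
    (h2 : (q₁ * (starRingEnd ℂ) q₂).re = (s₂ * (starRingEnd ℂ) s₁).re)
    (h3 : (q₁ * (starRingEnd ℂ) q₂).re ≠ 0) :
    ‖q₁‖ = ‖s₂‖ ∧ ‖q₂‖ = ‖s₁‖ := by
  have h1' : q₁ * s₁ = q₂ * s₂ := by linear_combination h1
  have key : q₁ * (starRingEnd ℂ) q₂ * (s₁ * (starRingEnd ℂ) s₁)
      = q₂ * (starRingEnd ℂ) q₂ * (s₂ * (starRingEnd ℂ) s₁) := by
    calc q₁ * (starRingEnd ℂ) q₂ * (s₁ * (starRingEnd ℂ) s₁)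
        = (q₁ * s₁) * ((starRingEnd ℂ) q₂ * (starRingEnd ℂ) s₁) := by ring
      _ = (q₂ * s₂) * ((starRingEnd ℂ) q₂ * (starRingEnd ℂ) s₁) := by rw [h1']
      _ = q₂ * (starRingEnd ℂ) q₂ * (s₂ * (starRingEnd ℂ) s₁) := by ring
  rw [Complex.mul_conj s₁, Complex.mul_conj q₂] at key
  have keyre := congrArg Complex.re key
  simp [Complex.mul_re] at keyre
  simp [Complex.mul_re] at h2 h3
  rw [← h2] at keyre
  have hns : Complex.normSq s₁ = Complex.normSq q₂ :=
    mul_left_cancel₀ h3 (by linarith [keyre])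
  have habs2 : ‖q₂‖ = ‖s₁‖ := by
    rw [Complex.norm_def, Complex.norm_def, hns]
  have hs₁ : s₁ ≠ 0 := fun h => h3 (by rw [h2, h]; simp)
  have habsmul : ‖q₁‖ * ‖s₁‖ = ‖q₂‖ * ‖s₂‖ := by
    rw [← norm_mul, ← norm_mul, h1']
  constructor
  · have hs₁' : ‖s₁‖ ≠ 0 := by simpa using hs₁
    rw [habs2] at habsmul
    exact mul_right_cancel₀ hs₁' (by linear_combination habsmul)
  · exact habs2
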